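/- Let n ≥ 5 and let p(s) = s^n + α1·s^{n-1} + ... + αn be a monic real polynomial, with the convention αk = 0 for k > n. If α5 - α1·α4 ≥ 0 and α7 - α1·α6 ≥ 0, then p is Hurwitz unstable, i.e., p has a complex root with nonnegative real part. -/

import Mathlib

open Polynomial

noncomputable def TCoef (p : ℝ[X]) (k : ℕ) : ℝ := p.reverse.coeff k

lemma TCoef_zero {p : ℝ[X]} (hp : p.Monic) : TCoef p 0 = 1 := by
  rw [TCoef, coeff_zero_reverse]; exact hp

lemma TCoef_eq_zero {p : ℝ[X]} {k : ℕ} (h : p.natDegree < k) : TCoef p k = 0 := by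
  rw [TCoef, coeff_reverse, revAt_eq_self_of_lt h]
  exact coeff_eq_zero_of_natDegree_lt h

lemma TCoef_eq {p : ℝ[X]} {k : ℕ} (h : k ≤ p.natDegree) :
    TCoef p k = p.coeff (p.natDegree - k) := by
  rw [TCoef, coeff_reverse, revAt_le h]

def Good (p : ℝ[X]) : Prop :=
  (∀ k, k ≤ p.natDegree → 0 < TCoef p k) ∧
  0 ≤ TCoef p 1 * TCoef p 2 - TCoef p 3 ∧
  0 ≤ TCoef p 1 * TCoef p 4 - TCoef p 5 ∧
  (5 ≤ p.natDegree → 0 < TCoef p 1 * TCoef p 4 - TCoef p 5)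

lemma Good.nonneg {p : ℝ[X]} (h : Good p) (k : ℕ) : 0 ≤ TCoef p k := by
  rcases le_or_gt k p.natDegree with hk | hk
  · exact (h.1 k hk).le
  · rw [TCoef_eq_zero hk]

lemma reverse_linear (b : ℝ) : (X + C b : ℝ[X]).reverse = 1 + C b * X := by
  rw [reverse_add_C, natDegree_X, pow_one]
  congr 1
  rw [reverse, natDegree_X, reflect_one_X]

lemma reverse_quadratic (c d : ℝ) :
    (X ^ 2 + C c * X + C d : ℝ[X]).reverse = 1 + C c * X + C d * X ^ 2 := by
  have h2 : (X ^ 2 + C c * X : ℝ[X]).natDegree = 2 := by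
    compute_degree!
  rw [reverse_add_C, h2]
  congr 1
  have : (X ^ 2 + C c * X : ℝ[X]) = (X + C c) * X := by ring
  rw [this, reverse_mul_X, reverse_linear]

lemma TCoef_linear {q : ℝ[X]} (hq : q.Monic) (b : ℝ) (k : ℕ) :
    TCoef ((X + C b) * q) (k + 1) = TCoef q (k + 1) + b * TCoef q k := by
  have hrev : ((X + C b) * q).reverse = (1 + C b * X) * q.reverse := by
    rw [reverse_mul, reverse_linear]
    rw [(monic_X_add_C b).leadingCoeff, hq.leadingCoeff, one_mul]
    exact one_ne_zero
  rw [TCoef, hrev]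
  rw [add_mul, one_mul, mul_assoc, coeff_add, coeff_C_mul, coeff_X_mul]
  rfl

lemma quad_monic (c d : ℝ) : (X ^ 2 + C c * X + C d : ℝ[X]).Monic := by
  rw [add_assoc]
  apply monic_X_pow_add
  apply lt_of_le_of_lt (degree_add_le _ _)
  apply max_lt
  · apply lt_of_le_of_lt (degree_C_mul_X_le c)
    decide
  · exact lt_of_le_of_lt degree_C_le (by decide)

lemma TCoef_quadratic {q : ℝ[X]} (hq : q.Monic) (c d : ℝ) (k : ℕ) :
    TCoef ((X ^ 2 + C c * X + C d) * q) (k + 2)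
      = TCoef q (k + 2) + c * TCoef q (k + 1) + d * TCoef q k := by
  have hfm : (X ^ 2 + C c * X + C d : ℝ[X]).Monic := quad_monic c d
  have hrev : ((X ^ 2 + C c * X + C d) * q).reverse
      = (1 + C c * X + C d * X ^ 2) * q.reverse := by
    rw [reverse_mul, reverse_quadratic]
    rw [hfm.leadingCoeff, hq.leadingCoeff, one_mul]
    exact one_ne_zero
  rw [TCoef, hrev]
  rw [add_mul, add_mul, one_mul, mul_assoc, mul_assoc, coeff_add, coeff_add,
    coeff_C_mul, coeff_C_mul, coeff_X_mul, coeff_X_pow_mul]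
  rfl

lemma TCoef_quadratic_one {q : ℝ[X]} (hq : q.Monic) (c d : ℝ) :
    TCoef ((X ^ 2 + C c * X + C d) * q) 1 = TCoef q 1 + c := by
  have hfm : (X ^ 2 + C c * X + C d : ℝ[X]).Monic := quad_monic c d
  have hrev : ((X ^ 2 + C c * X + C d) * q).reverse
      = (1 + C c * X + C d * X ^ 2) * q.reverse := by
    rw [reverse_mul, reverse_quadratic]
    rw [hfm.leadingCoeff, hq.leadingCoeff, one_mul]
    exact one_ne_zero
  have h2 : (X ^ 2 * q.reverse).coeff 1 = 0 := by
    rw [sq, mul_assoc, coeff_X_mul]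
    rw [mul_coeff_zero, coeff_X_zero, zero_mul]
  rw [TCoef, hrev]
  rw [add_mul, add_mul, one_mul, mul_assoc, mul_assoc, coeff_add, coeff_add,
    coeff_C_mul, coeff_C_mul, coeff_X_mul, h2, mul_zero, add_zero]
  have h0 : q.reverse.coeff 0 = 1 := by
    rw [coeff_zero_reverse]; exact hq.leadingCoeff
  rw [h0, mul_one]
  rfl

set_option maxHeartbeats 1000000 in
lemma key : ∀ n : ℕ, ∀ p : ℝ[X], p.natDegree = n → p.Monic →
    (∀ z : ℂ, aeval z p = 0 → z.re < 0) → Good p := by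
  intro n
  induction n using Nat.strong_induction_on with
  | _ n IH =>
  intro p hdeg hmon hroots
  rcases Nat.eq_zero_or_pos n with rfl | hn
  · have hp1 : p = 1 := hmon.natDegree_eq_zero.mp hdeg
    subst hp1
    have h0 : TCoef (1 : ℝ[X]) 0 = 1 := TCoef_zero monic_one
    have hz : ∀ k, 1 ≤ k → TCoef (1 : ℝ[X]) k = 0 := by
      intro k hk
      apply TCoef_eq_zero
      simp; omega
    refine ⟨?_, ?_, ?_, ?_⟩
    · intro k hk
      simp only [natDegree_one, Nat.le_zero] at hk
      subst hk
      rw [h0]; norm_num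
    · rw [hz 1 le_rfl, hz 3 (by norm_num)]; norm_num
    · rw [hz 1 le_rfl, hz 5 (by norm_num)]; norm_num
    · intro h; simp [natDegree_one] at h
  · -- there is a complex root
    have hp0 : p ≠ 0 := hmon.ne_zero
    have hdegpos : 0 < (p.map (algebraMap ℝ ℂ)).degree := by
      rw [degree_map]
      exact natDegree_pos_iff_degree_pos.mp (by omega)
    obtain ⟨z, hz⟩ := Complex.exists_root hdegpos
    have hza : aeval z p = 0 := by
      rw [aeval_def, eval₂_eq_eval_map]; exact hz
    have hzre : z.re < 0 := hroots z hza
    by_cases him : z.im = 0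
    · -- real root
      have hzr : z = ((z.re : ℝ) : ℂ) := by
        apply Complex.ext <;> simp [him]
      have hroot : p.IsRoot z.re := by
        apply isRoot_of_aeval_algebraMap_eq_zero (S := ℂ)
        have halg : (algebraMap ℝ ℂ) z.re = z := by rw [hzr]; rfl
        rw [halg]; exact hza
      obtain ⟨q, hq⟩ := dvd_iff_isRoot.mpr hroot
      obtain ⟨b, hb⟩ : ∃ b : ℝ, b = -z.re := ⟨_, rfl⟩
      have hbpos : 0 < b := by rw [hb]; linarith
      have hfq : p = (X + C b) * q := by
        rw [hq, hb, map_neg]; ring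
      have hfm : (X + C b : ℝ[X]).Monic := monic_X_add_C b
      have hqm : q.Monic := hfm.of_mul_monic_left (hfq ▸ hmon)
      have hdq : q.natDegree = n - 1 := by
        have := hfm.natDegree_mul hqm
        rw [← hfq, hdeg, natDegree_X_add_C] at this
        omega
      have hqroots : ∀ w : ℂ, aeval w q = 0 → w.re < 0 := by
        intro w hw
        apply hroots w
        rw [hfq, map_mul, hw, mul_zero]
      have gq : Good q := IH (n - 1) (by omega) q hdq hqm hqroots
      have hndeg : p.natDegree = q.natDegree + 1 := by omega
      -- recursions
      have r1 : TCoef p 1 = TCoef q 1 + b := by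
        rw [hfq, TCoef_linear hqm b 0, TCoef_zero hqm, mul_one]
      have r2 : TCoef p 2 = TCoef q 2 + b * TCoef q 1 := by
        rw [hfq]; exact TCoef_linear hqm b 1
      have r3 : TCoef p 3 = TCoef q 3 + b * TCoef q 2 := by
        rw [hfq]; exact TCoef_linear hqm b 2
      have r4 : TCoef p 4 = TCoef q 4 + b * TCoef q 3 := by
        rw [hfq]; exact TCoef_linear hqm b 3
      have r5 : TCoef p 5 = TCoef q 5 + b * TCoef q 4 := by
        rw [hfq]; exact TCoef_linear hqm b 4
      obtain ⟨gpos, gD1, gD2, gD2s⟩ := gq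
      refine ⟨?_, ?_, ?_, ?_⟩
      · intro k hk
        match k with
        | 0 => rw [TCoef_zero hmon]; norm_num
        | (j+1) =>
          have hj : j ≤ q.natDegree := by omega
          have h1 : 0 < TCoef q j := gpos j hj
          have h2 : 0 ≤ TCoef q (j+1) := Good.nonneg ⟨gpos, gD1, gD2, gD2s⟩ _
          have := TCoef_linear hqm b j
          rw [← hfq] at this
          rw [this]
          nlinarith [mul_pos hbpos h1, h2]
      · rw [r1, r2, r3]
        have h1 : 0 ≤ TCoef q 1 := Good.nonneg ⟨gpos, gD1, gD2, gD2s⟩ 1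
        nlinarith [gD1, mul_nonneg (mul_nonneg hbpos.le h1) h1,
          mul_nonneg (mul_nonneg hbpos.le hbpos.le) h1]
      · rw [r1, r4, r5]
        have h3 : 0 ≤ TCoef q 3 := Good.nonneg ⟨gpos, gD1, gD2, gD2s⟩ 3
        have h1 : 0 ≤ TCoef q 1 := Good.nonneg ⟨gpos, gD1, gD2, gD2s⟩ 1
        nlinarith [gD2, mul_nonneg (mul_nonneg hbpos.le h1) h3,
          mul_nonneg (mul_nonneg hbpos.le hbpos.le) h3]
      · intro h5
        rw [r1, r4, r5]
        have hq3 : 0 < TCoef q 3 := gpos 3 (by omega)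
        have h1 : 0 ≤ TCoef q 1 := Good.nonneg ⟨gpos, gD1, gD2, gD2s⟩ 1
        nlinarith [gD2, mul_nonneg (mul_nonneg hbpos.le h1) hq3.le,
          mul_pos (mul_pos hbpos hbpos) hq3]
    · -- nonreal root: quadratic factor
      obtain ⟨q, hq⟩ := p.quadratic_dvd_of_aeval_eq_zero_im_ne_zero hza him
      obtain ⟨c, hc⟩ : ∃ c : ℝ, c = -(2 * z.re) := ⟨_, rfl⟩
      obtain ⟨d, hd⟩ : ∃ d : ℝ, d = ‖z‖ ^ 2 := ⟨_, rfl⟩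
      have hcpos : 0 < c := by rw [hc]; linarith
      have hdpos : 0 < d := by
        have hz0 : z ≠ 0 := by
          intro h; rw [h] at hzre; simp at hzre
        rw [hd]
        exact pow_pos (norm_pos_iff.mpr hz0) 2
      have hfq : p = (X ^ 2 + C c * X + C d) * q := by
        rw [hq, hc, hd, map_neg]; ring
      have hfm : (X ^ 2 + C c * X + C d : ℝ[X]).Monic := quad_monic c d
      have hfd : (X ^ 2 + C c * X + C d : ℝ[X]).natDegree = 2 := by
        compute_degree!
      have hqm : q.Monic := hfm.of_mul_monic_left (hfq ▸ hmon)
      have hdq : q.natDegree = n - 2 ∧ n = q.natDegree + 2 := by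
        have := hfm.natDegree_mul hqm
        rw [← hfq, hdeg, hfd] at this
        omega
      have hqroots : ∀ w : ℂ, aeval w q = 0 → w.re < 0 := by
        intro w hw
        apply hroots w
        rw [hfq, map_mul, hw, mul_zero]
      have gq : Good q := IH q.natDegree (by omega) q rfl hqm hqroots
      have hndeg : p.natDegree = q.natDegree + 2 := by omega
      have r1 : TCoef p 1 = TCoef q 1 + c := by
        rw [hfq]; exact TCoef_quadratic_one hqm c d
      have r2 : TCoef p 2 = TCoef q 2 + c * TCoef q 1 + d := by
        rw [hfq, TCoef_quadratic hqm c d 0, TCoef_zero hqm, mul_one]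
      have r3 : TCoef p 3 = TCoef q 3 + c * TCoef q 2 + d * TCoef q 1 := by
        rw [hfq]; exact TCoef_quadratic hqm c d 1
      have r4 : TCoef p 4 = TCoef q 4 + c * TCoef q 3 + d * TCoef q 2 := by
        rw [hfq]; exact TCoef_quadratic hqm c d 2
      have r5 : TCoef p 5 = TCoef q 5 + c * TCoef q 4 + d * TCoef q 3 := by
        rw [hfq]; exact TCoef_quadratic hqm c d 3
      obtain ⟨gpos, gD1, gD2, gD2s⟩ := gq
      have hn1 : 0 ≤ TCoef q 1 := Good.nonneg ⟨gpos, gD1, gD2, gD2s⟩ 1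
      have hn2 : 0 ≤ TCoef q 2 := Good.nonneg ⟨gpos, gD1, gD2, gD2s⟩ 2
      have hn3 : 0 ≤ TCoef q 3 := Good.nonneg ⟨gpos, gD1, gD2, gD2s⟩ 3
      have hn4 : 0 ≤ TCoef q 4 := Good.nonneg ⟨gpos, gD1, gD2, gD2s⟩ 4
      refine ⟨?_, ?_, ?_, ?_⟩
      · intro k hk
        match k with
        | 0 => rw [TCoef_zero hmon]; norm_num
        | 1 =>
          rw [r1]
          linarith
        | (j+2) =>
          have hj : j ≤ q.natDegree := by omega
          have h1 : 0 < TCoef q j := gpos j hj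
          have h2 : 0 ≤ TCoef q (j+1) := Good.nonneg ⟨gpos, gD1, gD2, gD2s⟩ _
          have h3 : 0 ≤ TCoef q (j+2) := Good.nonneg ⟨gpos, gD1, gD2, gD2s⟩ _
          have := TCoef_quadratic hqm c d j
          rw [← hfq] at this
          rw [this]
          nlinarith [mul_pos hdpos h1, mul_nonneg hcpos.le h2, h3]
      · rw [r1, r2, r3]
        nlinarith [gD1, mul_nonneg (mul_nonneg hcpos.le hn1) hn1,
          mul_nonneg (mul_nonneg hcpos.le hcpos.le) hn1, mul_pos hcpos hdpos]
      · rw [r1, r4, r5]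
        have e1 : 0 ≤ d * (TCoef q 1 * TCoef q 2 - TCoef q 3) := mul_nonneg hdpos.le gD1
        have e2 : 0 ≤ c * (TCoef q 1 * TCoef q 3) :=
          mul_nonneg hcpos.le (mul_nonneg hn1 hn3)
        have e3 : 0 ≤ c * (c * TCoef q 3) :=
          mul_nonneg hcpos.le (mul_nonneg hcpos.le hn3)
        have e4 : 0 ≤ c * (d * TCoef q 2) :=
          mul_nonneg hcpos.le (mul_nonneg hdpos.le hn2)
        linarith [gD2, e1, e2, e3, e4]
      · intro h5
        rw [r1, r4, r5]
        have hq2 : 0 < TCoef q 2 := gpos 2 (by omega)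
        have e1 : 0 ≤ d * (TCoef q 1 * TCoef q 2 - TCoef q 3) := mul_nonneg hdpos.le gD1
        have e2 : 0 ≤ c * (TCoef q 1 * TCoef q 3) :=
          mul_nonneg hcpos.le (mul_nonneg hn1 hn3)
        have e3 : 0 ≤ c * (c * TCoef q 3) :=
          mul_nonneg hcpos.le (mul_nonneg hcpos.le hn3)
        have e4 : 0 < c * (d * TCoef q 2) :=
          mul_pos hcpos (mul_pos hdpos hq2)
        linarith [gD2, e1, e2, e3, e4]

theorem unstable_of_ineqs (n : ℕ) (hn : 5 ≤ n) (α : ℕ → ℝ)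
    (hconv : ∀ k, n < k → α k = 0)
    (h5 : 0 ≤ α 5 - α 1 * α 4) (h7 : 0 ≤ α 7 - α 1 * α 6) :
    ∃ z : ℂ, aeval z (X ^ n + ∑ i ∈ Finset.range n, C (α (i + 1)) * X ^ (n - 1 - i)) = 0
      ∧ 0 ≤ z.re := by
  by_contra hcon
  push_neg at hcon
  set P : ℝ[X] := X ^ n + ∑ i ∈ Finset.range n, C (α (i + 1)) * X ^ (n - 1 - i) with hP
  have hSdeg : (∑ i ∈ Finset.range n, C (α (i + 1)) * X ^ (n - 1 - i) : ℝ[X]).degree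
      < (X ^ n : ℝ[X]).degree := by
    rw [degree_X_pow]
    apply lt_of_le_of_lt (degree_sum_le _ _)
    refine (Finset.sup_lt_iff ?_).mpr ?_
    · exact_mod_cast WithBot.bot_lt_coe n
    intro i hi
    apply lt_of_le_of_lt (degree_C_mul_X_pow_le (n - 1 - i) (α (i + 1)))
    have hi' : i < n := Finset.mem_range.mp hi
    exact_mod_cast (by omega : n - 1 - i < n)
  have hSdeg' : (∑ i ∈ Finset.range n, C (α (i + 1)) * X ^ (n - 1 - i) : ℝ[X]).degree
      < ((n : ℕ) : WithBot ℕ) := by rw [degree_X_pow] at hSdeg; exact_mod_cast hSdeg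
  have hmon : P.Monic := monic_X_pow_add hSdeg'
  have hPdeg : P.degree = (X ^ n : ℝ[X]).degree :=
    degree_add_eq_left_of_degree_lt hSdeg
  have hdeg : P.natDegree = n := by
    rw [degree_X_pow] at hPdeg
    exact natDegree_eq_of_degree_eq_some hPdeg
  have hcoef : ∀ k, 1 ≤ k → k ≤ n → TCoef P k = α k := by
    intro k hk1 hkn
    rw [TCoef_eq (show k ≤ P.natDegree by rw [hdeg]; omega), hdeg]
    rw [hP, coeff_add, coeff_X_pow, if_neg (by omega : ¬ n - k = n)]
    rw [finset_sum_coeff]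
    simp only [coeff_C_mul, coeff_X_pow]
    rw [Finset.sum_eq_single (k - 1)]
    · rw [if_pos (by omega : n - k = n - 1 - (k - 1)), mul_one]
      have hk : k - 1 + 1 = k := by omega
      rw [hk, zero_add]
    · intro i hi hik
      have hi' : i < n := Finset.mem_range.mp hi
      rw [if_neg (by omega : ¬ n - k = n - 1 - i), mul_zero]
    · intro h
      exact absurd (Finset.mem_range.mpr (by omega : k - 1 < n)) h
  have hgood : Good P := key n P hdeg hmon hcon
  have hstrict := hgood.2.2.2 (by omega)
  rw [hcoef 1 (by omega) (by omega), hcoef 4 (by omega) (by omega),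
    hcoef 5 (by omega) (by omega)] at hstrict
  linarith
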